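/- Suppose φ is analytic on the disc |y| < r_0 with ‖φ‖_r ≤ K_0 r² for all r < r_0, where ‖φ‖_r = sup{|φ(y)| : |y| < r} and K_0 > 0. If r < r_0(1 − K_0 r_0), then the map y ↦ y + φ(y) has a well-defined inverse of the form x ↦ x + ψ(x) on |x| < r* := r − ‖φ‖_r, and ‖ψ‖_{r*} ≤ ‖φ‖_r. -/

import Mathlib

open Metric

/-- Cauchy-estimate Lipschitz bound: if `φ` is differentiable on `ball 0 r'` with norm ≤ M there,
then `φ` is `M/(r'-r)`-Lipschitz on `ball 0 r`. -/
lemma lip_aux (φ : ℂ × ℂ → ℂ × ℂ) (r r' M : ℝ) (hr : 0 < r) (hrr' : r < r')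
    (hφ : DifferentiableOn ℂ φ (ball 0 r'))
    (hM : ∀ y ∈ ball (0 : ℂ × ℂ) r', ‖φ y‖ ≤ M) :
    ∀ y₁ ∈ ball (0 : ℂ × ℂ) r, ∀ y₂ ∈ ball (0 : ℂ × ℂ) r,
      ‖φ y₁ - φ y₂‖ ≤ M / (r' - r) * ‖y₁ - y₂‖ := by
  have hr'pos : 0 < r' := hr.trans hrr'
  have hsub : (0:ℝ) < r' - r := by linarith
  have hM0 : 0 ≤ M := le_trans (norm_nonneg _) (hM 0 (mem_ball_self hr'pos))
  have hC0 : 0 ≤ M / (r' - r) := div_nonneg hM0 hsub.le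
  have hdiffAt : ∀ y ∈ ball (0 : ℂ × ℂ) r, DifferentiableAt ℂ φ y := fun y hy =>
    hφ.differentiableAt (isOpen_ball.mem_nhds (ball_subset_ball hrr'.le hy))
  have bound : ∀ y ∈ ball (0 : ℂ × ℂ) r, ‖fderiv ℂ φ y‖ ≤ M / (r' - r) := by
    intro y hy
    refine ContinuousLinearMap.opNorm_le_bound _ hC0 fun v => ?_
    rcases eq_or_ne v 0 with rfl | hv
    · simp [hC0]
    have hvn : 0 < ‖v‖ := norm_pos_iff.2 hv
    set ρ : ℝ := (r' - r) / ‖v‖ with hρdef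
    have hρ : 0 < ρ := div_pos hsub hvn
    have hyn : ‖y‖ < r := mem_ball_zero_iff.1 hy
    have hmem : ∀ t : ℂ, ‖t‖ ≤ ρ → y + t • v ∈ ball (0 : ℂ × ℂ) r' := by
      intro t ht
      rw [mem_ball_zero_iff]
      have : ‖y + t • v‖ ≤ ‖y‖ + ‖t‖ * ‖v‖ := by
        calc ‖y + t • v‖ ≤ ‖y‖ + ‖t • v‖ := norm_add_le _ _
        _ = ‖y‖ + ‖t‖ * ‖v‖ := by rw [norm_smul]
      have h2 : ‖t‖ * ‖v‖ ≤ ρ * ‖v‖ := mul_le_mul_of_nonneg_right ht (norm_nonneg v)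
      have h3 : ρ * ‖v‖ = r' - r := div_mul_cancel₀ _ hvn.ne'
      linarith
    set g : ℂ → ℂ × ℂ := fun t => φ (y + t • v) with hgdef
    have hgd : DifferentiableOn ℂ g (closedBall 0 ρ) := by
      intro t ht
      have h1 : DifferentiableAt ℂ (fun t : ℂ => y + t • v) t :=
        ((differentiable_id.smul_const v).const_add y).differentiableAt
      have h2 : DifferentiableAt ℂ φ (y + t • v) :=
        hφ.differentiableAt (isOpen_ball.mem_nhds (hmem t (mem_closedBall_zero_iff.1 ht)))
      exact (h2.comp t h1).differentiableWithinAt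
    have hcl : DiffContOnCl ℂ g (ball 0 ρ) := by
      apply DifferentiableOn.diffContOnCl
      rwa [closure_ball (0:ℂ) hρ.ne']
    have hsph : ∀ z ∈ sphere (0:ℂ) ρ, ‖g z‖ ≤ M := by
      intro z hz
      exact hM _ (hmem z (le_of_eq (mem_sphere_zero_iff_norm.1 hz)))
    have hL : HasDerivAt (fun t : ℂ => y + t • v) v 0 := by
      simpa using ((hasDerivAt_id (0:ℂ)).smul_const v).const_add y
    have hderiv : HasDerivAt g (fderiv ℂ φ y v) 0 := by
      have h2 : DifferentiableAt ℂ φ y := hdiffAt y hy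
      have h2' : HasFDerivAt φ (fderiv ℂ φ y) (y + (0:ℂ) • v) := by simpa using h2.hasFDerivAt
      exact h2'.comp_hasDerivAt 0 hL
    have hest : ‖deriv g 0‖ ≤ M / ρ :=
      Complex.norm_deriv_le_of_forall_mem_sphere_norm_le hρ hcl hsph
    rw [hderiv.deriv] at hest
    calc ‖fderiv ℂ φ y v‖ ≤ M / ρ := hest
      _ = M / (r' - r) * ‖v‖ := by
          rw [hρdef, div_div_eq_mul_div, mul_comm M ‖v‖, mul_div_assoc, mul_comm]
  intro y₁ h₁ y₂ h₂
  exact (convex_ball (0:ℂ × ℂ) r).norm_image_sub_le_of_norm_fderiv_le hdiffAt bound h₂ h₁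

theorem stmt_9 (φ : ℂ × ℂ → ℂ × ℂ) (r0 K0 : ℝ) (hr0 : 0 < r0) (hK0 : 0 < K0)
    (hφ : AnalyticOn ℂ φ (ball 0 r0))
    (hbound : ∀ r : ℝ, 0 < r → r < r0 → ∀ y ∈ ball (0 : ℂ × ℂ) r, ‖φ y‖ ≤ K0 * r ^ 2)
    (r : ℝ) (hr : 0 < r) (hrlt : r < r0 * (1 - K0 * r0)) :
    ∃ normφr : ℝ,
      (normφr = ⨆ y : ball (0 : ℂ × ℂ) r, ‖φ (y : ℂ × ℂ)‖) ∧
      Set.InjOn (fun y => y + φ y) (ball (0 : ℂ × ℂ) r) ∧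
      ∃ ψ : ℂ × ℂ → ℂ × ℂ,
        (∀ x ∈ ball (0 : ℂ × ℂ) (r - normφr),
          x + ψ x ∈ ball (0 : ℂ × ℂ) r ∧ (x + ψ x) + φ (x + ψ x) = x) ∧
        (∀ x ∈ ball (0 : ℂ × ℂ) (r - normφr), ‖ψ x‖ ≤ normφr) := by
  have hK0r0 : K0 * r0 < 1 := by nlinarith
  have hrr0 : r < r0 := by nlinarith [mul_pos hK0 (mul_pos hr0 hr0)]
  -- choose r' with r < r' < r0 and r < r' - K0 * r'^2
  set c : ℝ := r0 * (1 - K0 * r0) - r with hcdef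
  have hc : 0 < c := by linarith
  set δ : ℝ := min (r0 / 2) (c / (2 * (1 + 2 * K0 * r0))) with hδdef
  have hden : (0:ℝ) < 2 * (1 + 2 * K0 * r0) := by nlinarith
  have hδ : 0 < δ := lt_min (by linarith) (div_pos hc hden)
  set r' : ℝ := r0 - δ with hr'def
  have hδle1 : δ ≤ r0 / 2 := min_le_left _ _
  have hδle2 : δ ≤ c / (2 * (1 + 2 * K0 * r0)) := min_le_right _ _
  have hδle2' : δ * (2 * (1 + 2 * K0 * r0)) ≤ c := by
    exact (le_div_iff₀ hden).1 hδle2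
  have hr'pos : 0 < r' := by simp only [hr'def]; linarith
  have hr'lt : r' < r0 := by simp only [hr'def]; linarith
  have hkey : r < r' - K0 * r' ^ 2 := by
    simp only [hr'def]
    nlinarith [sq_nonneg δ, mul_pos hK0 (mul_pos hδ hδ)]
  have hrr' : r < r' := by nlinarith [mul_pos hK0 (mul_pos hr'pos hr'pos)]
  -- Lipschitz constant
  set M : ℝ := K0 * r' ^ 2 with hMdef
  have hMpos : 0 < M := by positivity
  set L : ℝ := M / (r' - r) with hLdef
  have hsubpos : (0:ℝ) < r' - r := by linarith
  have hL0 : 0 ≤ L := div_nonneg hMpos.le hsubpos.le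
  have hL1 : L < 1 := by
    rw [hLdef, div_lt_one hsubpos]; linarith
  have hMb : ∀ y ∈ ball (0 : ℂ × ℂ) r', ‖φ y‖ ≤ M := hbound r' hr'pos hr'lt
  have hlip := lip_aux φ r r' M hr hrr'
    ((hφ.mono (ball_subset_ball hr'lt.le)).differentiableOn) hMb
  -- the sup
  haveI : Nonempty (ball (0 : ℂ × ℂ) r) := ⟨⟨0, mem_ball_self hr⟩⟩
  set normφr : ℝ := ⨆ y : ball (0 : ℂ × ℂ) r, ‖φ (y : ℂ × ℂ)‖ with hnd
  have hbdd : BddAbove (Set.range fun y : ball (0 : ℂ × ℂ) r => ‖φ (y : ℂ × ℂ)‖) := by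
    refine ⟨K0 * r ^ 2, ?_⟩
    rintro _ ⟨y, rfl⟩
    exact hbound r hr hrr0 y y.2
  have hle_sup : ∀ y ∈ ball (0 : ℂ × ℂ) r, ‖φ y‖ ≤ normφr := fun y hy =>
    le_ciSup hbdd (⟨y, hy⟩ : ball (0 : ℂ × ℂ) r)
  have hsup0 : 0 ≤ normφr := le_trans (norm_nonneg _) (hle_sup 0 (mem_ball_self hr))
  refine ⟨normφr, rfl, ?_, ?_⟩
  · -- injectivity
    intro y₁ h₁ y₂ h₂ heq
    simp only at heq
    have h3 : ‖φ y₁ - φ y₂‖ ≤ L * ‖y₁ - y₂‖ := hlip y₁ h₁ y₂ h₂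
    have h4 : y₂ - y₁ = φ y₁ - φ y₂ := by
      linear_combination -heq
    have h5 : ‖y₁ - y₂‖ ≤ L * ‖y₁ - y₂‖ := by
      calc ‖y₁ - y₂‖ = ‖y₂ - y₁‖ := (norm_sub_rev _ _)
        _ = ‖φ y₁ - φ y₂‖ := by rw [h4]
        _ ≤ L * ‖y₁ - y₂‖ := h3
    have h6 : ‖y₁ - y₂‖ = 0 := by nlinarith [norm_nonneg (y₁ - y₂)]
    have := norm_eq_zero.1 h6
    exact sub_eq_zero.1 this
  · -- the inverse
    have hexists : ∀ x ∈ ball (0 : ℂ × ℂ) (r - normφr),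
        ∃ y : ℂ × ℂ, y ∈ ball (0 : ℂ × ℂ) r ∧ y + φ y = x ∧ ‖y - x‖ ≤ normφr := by
      intro x hx
      have hxn : ‖x‖ < r - normφr := mem_ball_zero_iff.1 hx
      set s : ℝ := (‖x‖ + normφr + r) / 2 with hsdef
      have hs1 : ‖x‖ + normφr < s := by simp only [hsdef]; linarith
      have hs2 : s < r := by simp only [hsdef]; linarith
      have hs0 : 0 ≤ s := by positivity
      set α := closedBall (0 : ℂ × ℂ) s with hαdef
      haveI : Nonempty α := ⟨⟨0, mem_closedBall_self hs0⟩⟩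
      haveI : CompleteSpace α := (isClosed_closedBall (x := (0:ℂ × ℂ)) (ε := s)).completeSpace_coe
      have hsub_ball : ∀ y : α, (y : ℂ × ℂ) ∈ ball (0 : ℂ × ℂ) r := by
        intro y
        exact mem_ball_zero_iff.2 (lt_of_le_of_lt (mem_closedBall_zero_iff.1 y.2) hs2)
      have hFmem : ∀ y : α, x - φ (y : ℂ × ℂ) ∈ α := by
        intro y
        have : ‖x - φ (y : ℂ × ℂ)‖ ≤ s := calc ‖x - φ (y : ℂ × ℂ)‖ ≤ ‖x‖ + ‖φ (y : ℂ × ℂ)‖ := norm_sub_le _ _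
          _ ≤ ‖x‖ + normφr := by
              have := hle_sup _ (hsub_ball y); linarith
          _ ≤ s := hs1.le
        exact mem_closedBall_zero_iff.2 this
      set F : α → α := fun y => ⟨x - φ (y : ℂ × ℂ), hFmem y⟩ with hFdef
      have hlips : LipschitzWith (Real.toNNReal L) F := by
        apply LipschitzWith.of_dist_le_mul
        intro a b
        have h1 : dist (F a) (F b) = ‖φ (b : ℂ × ℂ) - φ (a : ℂ × ℂ)‖ := by
          simp only [hFdef, Subtype.dist_eq, dist_eq_norm]
          congr 1
          abel
        have h2 : dist a b = ‖(a : ℂ × ℂ) - (b : ℂ × ℂ)‖ := by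
          simp [Subtype.dist_eq, dist_eq_norm]
        rw [h1, h2, Real.coe_toNNReal _ hL0]
        calc ‖φ (b : ℂ × ℂ) - φ (a : ℂ × ℂ)‖ ≤ L * ‖(b : ℂ × ℂ) - (a : ℂ × ℂ)‖ :=
              hlip _ (hsub_ball b) _ (hsub_ball a)
          _ = L * ‖(a : ℂ × ℂ) - (b : ℂ × ℂ)‖ := by rw [norm_sub_rev]
      have hcontr : ContractingWith (Real.toNNReal L) F :=
        ⟨by simpa using Real.toNNReal_lt_one.2 hL1, hlips⟩
      set y : α := hcontr.fixedPoint F with hydef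
      have hfix : F y = y := hcontr.fixedPoint_isFixedPt
      have hfix' : x - φ (y : ℂ × ℂ) = (y : ℂ × ℂ) := congrArg Subtype.val hfix
      refine ⟨(y : ℂ × ℂ), hsub_ball y, ?_, ?_⟩
      · linear_combination -hfix'
      · have : (y : ℂ × ℂ) - x = -φ (y : ℂ × ℂ) := by
          linear_combination -hfix'
        rw [this, norm_neg]
        exact hle_sup _ (hsub_ball y)
    classical
    refine ⟨fun x => if h : x ∈ ball (0 : ℂ × ℂ) (r - normφr)
      then (hexists x h).choose - x else 0, ?_, ?_⟩
    · intro x hx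
      simp only [dif_pos hx]
      obtain ⟨hy1, hy2, _⟩ := (hexists x hx).choose_spec
      have hxe : x + ((hexists x hx).choose - x) = (hexists x hx).choose := by abel
      rw [hxe]
      exact ⟨hy1, hy2⟩
    · intro x hx
      simp only [dif_pos hx]
      exact (hexists x hx).choose_spec.2.2
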